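/- arXiv:1804.04828 — 4 statements merged into one kernel-verified Lean document; each statement's English description precedes it below -/
import Mathlib

section
/- Let n be a positive integer, let d ≥ 2, let U be a d-bounded multilinear Littlewood family on n variables, and set q = 1/(2(d−1)). For X ⊆ {1,…,n} and i ∈ {1,…,n} let m_i(X) = |{S ∈ U : S ∩ X = {i}}| and u_i = |{S ∈ U : i ∈ S}|. Then for every i, ∑_{X ⊆ {1,…,n}} q^{|X|}(1−q)^{n−|X|} · √(m_i(X)) ≥ 2^{−5/2} · (d−1)^{−3/2} · √(u_i). -/
open Finset

/-- Total weight of subsets of `T` is 1. -/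
lemma littlewood_sum_weights {α : Type*} [DecidableEq α] (T : Finset α) (p : ℝ) :
    ∑ Y ∈ T.powerset, p ^ Y.card * (1 - p) ^ (T.card - Y.card) = 1 := by
  calc ∑ Y ∈ T.powerset, p ^ Y.card * (1 - p) ^ (T.card - Y.card)
      = ∑ Y ∈ T.powerset, (∏ _x ∈ Y, p) * ∏ _x ∈ T \ Y, (1 - p) := by
        refine Finset.sum_congr rfl fun Y hY => ?_
        rw [Finset.prod_const, Finset.prod_const,
          Finset.card_sdiff_of_subset (Finset.mem_powerset.mp hY)]
    _ = ∏ _x ∈ T, (p + (1 - p)) := (Finset.prod_add _ _ _).symm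
    _ = 1 := by simp

/-- Probability that `S ∩ X = {i}`. -/
lemma littlewood_cond_sum (n : ℕ) (q : ℝ) (S : Finset (Fin n)) (i : Fin n)
    (hi : i ∈ S) :
    ∑ X : Finset (Fin n),
        (if S ∩ X = {i} then q ^ X.card * (1 - q) ^ (n - X.card) else 0)
      = q * (1 - q) ^ (S.card - 1) := by
  classical
  rw [← Finset.sum_filter]
  have hset : Finset.univ.filter (fun X : Finset (Fin n) => S ∩ X = {i})
      = Sᶜ.powerset.image (insert i) := by
    ext X
    simp only [Finset.mem_filter, Finset.mem_univ, true_and, Finset.mem_image,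
      Finset.mem_powerset]
    constructor
    · intro hX
      have hiX : i ∈ X := by
        have : i ∈ S ∩ X := by rw [hX]; exact Finset.mem_singleton_self i
        exact (Finset.mem_inter.mp this).2
      refine ⟨X.erase i, ?_, ?_⟩
      · intro j hj
        rw [Finset.mem_compl]
        intro hjS
        have hjX : j ∈ X := Finset.mem_of_mem_erase hj
        have : j ∈ S ∩ X := Finset.mem_inter.mpr ⟨hjS, hjX⟩
        rw [hX, Finset.mem_singleton] at this
        exact (Finset.ne_of_mem_erase hj) this
      · exact Finset.insert_erase hiX
    · rintro ⟨Y, hY, rfl⟩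
      ext j
      simp only [Finset.mem_inter, Finset.mem_insert, Finset.mem_singleton]
      constructor
      · rintro ⟨hjS, (rfl | hjY)⟩
        · rfl
        · exact absurd hjS (Finset.mem_compl.mp (hY hjY))
      · rintro rfl
        exact ⟨hi, Or.inl rfl⟩
  rw [hset]
  have hinj : ∀ Y ∈ Sᶜ.powerset, ∀ Z ∈ Sᶜ.powerset,
      insert i Y = insert i Z → Y = Z := by
    intro Y hY Z hZ h
    have hiY : i ∉ Y := fun h' => Finset.mem_compl.mp (Finset.mem_powerset.mp hY h') hi
    have hiZ : i ∉ Z := fun h' => Finset.mem_compl.mp (Finset.mem_powerset.mp hZ h') hi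
    rw [← Finset.erase_insert hiY, ← Finset.erase_insert hiZ, h]
  rw [Finset.sum_image hinj]
  have hcompl : Sᶜ.card = n - S.card := by
    rw [Finset.card_compl]; simp
  have hstep : ∀ Y ∈ Sᶜ.powerset,
      q ^ (insert i Y).card * (1 - q) ^ (n - (insert i Y).card)
        = (q * (1 - q) ^ (S.card - 1)) * (q ^ Y.card * (1 - q) ^ (Sᶜ.card - Y.card)) := by
    intro Y hY
    have hiY : i ∉ Y := fun h' => Finset.mem_compl.mp (Finset.mem_powerset.mp hY h') hi
    have hYc : Y.card ≤ Sᶜ.card := Finset.card_le_card (Finset.mem_powerset.mp hY)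
    have hS1 : 1 ≤ S.card := Finset.card_pos.mpr ⟨i, hi⟩
    have hScard : S.card ≤ n := by
      simpa using Finset.card_le_card (Finset.subset_univ S)
    rw [Finset.card_insert_of_notMem hiY]
    have harith : n - (Y.card + 1) = (S.card - 1) + (Sᶜ.card - Y.card) := by
      rw [hcompl] at hYc ⊢
      omega
    rw [harith, pow_add, pow_succ]
    ring
  rw [Finset.sum_congr rfl hstep, ← Finset.mul_sum, littlewood_sum_weights, mul_one]

/-- expected root of split size: For `d ≥ 2`, a `d`-bounded multilinear
Littlewood family `U` on `n` variables, and `q = 1/(2(d−1))`, for every `i` the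
expectation of `√(m i (X))` over the random subset `X` (each element included
independently with probability `q`) is at least `2^(−5/2) (d−1)^(−3/2) √(u i)`. -/
theorem littlewood_split_sqrt_expectation
    (n : ℕ) (hn : 0 < n) (d : ℕ) (hd : 2 ≤ d)
    (U : Finset (Finset (Fin n)))
    (hU : ∀ S ∈ U, S.Nonempty ∧ S.card ≤ d) (i : Fin n) :
    (2:ℝ) ^ (-(5:ℝ)/2) * ((d:ℝ) - 1) ^ (-(3:ℝ)/2) *
        Real.sqrt ((U.filter (fun S => i ∈ S)).card) ≤
      ∑ X : Finset (Fin n),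
        (1 / (2 * ((d:ℝ) - 1))) ^ X.card *
          (1 - 1 / (2 * ((d:ℝ) - 1))) ^ (n - X.card) *
          Real.sqrt ((U.filter (fun S => S ∩ X = {i})).card) := by
  classical
  set q : ℝ := 1 / (2 * ((d:ℝ) - 1)) with hqdef
  have hd1 : (1:ℝ) ≤ (d:ℝ) - 1 := by
    have : (2:ℝ) ≤ (d:ℝ) := by exact_mod_cast hd
    linarith
  have hq0 : 0 < q := by
    rw [hqdef]; positivity
  have hqhalf : q ≤ 1/2 := by
    rw [hqdef, div_le_div_iff₀ (by linarith) (by norm_num)]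
    linarith
  have h1q : (1:ℝ)/2 ≤ 1 - q := by linarith
  have hw : ∀ X : Finset (Fin n), (0:ℝ) ≤ q ^ X.card * (1 - q) ^ (n - X.card) :=
    fun X => mul_nonneg (pow_nonneg hq0.le _) (pow_nonneg (by linarith) _)
  set u : ℕ := (U.filter (fun S => i ∈ S)).card with hudef
  have hmu : ∀ X : Finset (Fin n), (U.filter (fun S => S ∩ X = {i})).card ≤ u := by
    intro X
    apply Finset.card_le_card
    intro S hS
    rw [Finset.mem_filter] at hS ⊢
    refine ⟨hS.1, ?_⟩
    have : i ∈ S ∩ X := by rw [hS.2]; exact Finset.mem_singleton_self i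
    exact (Finset.mem_inter.mp this).1
  by_cases hu : u = 0
  · rw [hu]
    simp only [Nat.cast_zero, Real.sqrt_zero, mul_zero]
    exact Finset.sum_nonneg fun X _ => mul_nonneg (hw X) (Real.sqrt_nonneg _)
  have hu0 : 0 < (u:ℝ) := by exact_mod_cast Nat.pos_of_ne_zero hu
  have hsu : 0 < Real.sqrt u := Real.sqrt_pos.mpr hu0
  -- pointwise : m ≤ √m · √u
  have hpt : ∀ X : Finset (Fin n),
      ((U.filter (fun S => S ∩ X = {i})).card : ℝ)
        ≤ Real.sqrt ((U.filter (fun S => S ∩ X = {i})).card) * Real.sqrt u := by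
    intro X
    set m : ℕ := (U.filter (fun S => S ∩ X = {i})).card with hmdef
    calc (m:ℝ) = Real.sqrt ((m:ℝ) * m) := by
          rw [Real.sqrt_mul_self (Nat.cast_nonneg m)]
      _ ≤ Real.sqrt ((m:ℝ) * u) := by
          apply Real.sqrt_le_sqrt
          apply mul_le_mul_of_nonneg_left _ (Nat.cast_nonneg m)
          exact_mod_cast hmu X
      _ = Real.sqrt m * Real.sqrt u := Real.sqrt_mul (Nat.cast_nonneg m) _
  -- expected value of m
  have hexp : (u:ℝ) * (q/2)
      ≤ ∑ X : Finset (Fin n), q ^ X.card * (1 - q) ^ (n - X.card) *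
          ((U.filter (fun S => S ∩ X = {i})).card : ℝ) := by
    have hswap : ∑ X : Finset (Fin n), q ^ X.card * (1 - q) ^ (n - X.card) *
          ((U.filter (fun S => S ∩ X = {i})).card : ℝ)
        = ∑ S ∈ U, ∑ X : Finset (Fin n),
            (if S ∩ X = {i} then q ^ X.card * (1 - q) ^ (n - X.card) else 0) := by
      rw [Finset.sum_comm]
      refine Finset.sum_congr rfl fun X _ => ?_
      rw [Finset.card_filter]
      push_cast
      rw [Finset.mul_sum]
      refine Finset.sum_congr rfl fun S _ => ?_
      split_ifs <;> simp
    rw [hswap]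
    have hinner : ∀ S ∈ U.filter (fun S => i ∈ S), q/2
        ≤ ∑ X : Finset (Fin n),
            (if S ∩ X = {i} then q ^ X.card * (1 - q) ^ (n - X.card) else 0) := by
      intro S hS
      rw [Finset.mem_filter] at hS
      rw [littlewood_cond_sum n q S i hS.2]
      have hScard : S.card ≤ d := (hU S hS.1).2
      have hb : (1:ℝ)/2 ≤ (1 - q) ^ (d - 1) := by
        have h := one_add_mul_le_pow (a := -q) (by linarith) (d - 1)
        have hcast : ((d - 1 : ℕ) : ℝ) = (d:ℝ) - 1 := by
          have h1 : (1:ℕ) ≤ d := by omega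
          push_cast [h1]
          ring
        rw [hcast] at h
        have hval : 1 + ((d:ℝ) - 1) * (-q) = 1/2 := by
          rw [hqdef]
          field_simp
          ring
        rw [hval, ← sub_eq_add_neg] at h
        simpa using h
      have hmono : (1 - q) ^ (d - 1) ≤ (1 - q) ^ (S.card - 1) := by
        apply pow_le_pow_of_le_one (by linarith) (by linarith)
        omega
      calc q / 2 = q * (1/2) := by ring
        _ ≤ q * (1 - q) ^ (S.card - 1) := by
            apply mul_le_mul_of_nonneg_left _ hq0.le
            exact hb.trans hmono
    have hnn : ∀ S ∈ U, S ∉ U.filter (fun S => i ∈ S) →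
        (0:ℝ) ≤ ∑ X : Finset (Fin n),
          (if S ∩ X = {i} then q ^ X.card * (1 - q) ^ (n - X.card) else 0) := by
      intro S _ _
      apply Finset.sum_nonneg
      intro X _
      split_ifs
      · exact hw X
      · exact le_rfl
    calc (u:ℝ) * (q/2) = ∑ _S ∈ U.filter (fun S => i ∈ S), (q/2) := by
          rw [Finset.sum_const, hudef, nsmul_eq_mul]
      _ ≤ ∑ S ∈ U.filter (fun S => i ∈ S), ∑ X : Finset (Fin n),
            (if S ∩ X = {i} then q ^ X.card * (1 - q) ^ (n - X.card) else 0) :=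
          Finset.sum_le_sum hinner
      _ ≤ ∑ S ∈ U, ∑ X : Finset (Fin n),
            (if S ∩ X = {i} then q ^ X.card * (1 - q) ^ (n - X.card) else 0) :=
          Finset.sum_le_sum_of_subset_of_nonneg (Finset.filter_subset _ _) hnn
  -- combine : √u · (q/2) ≤ expectation of √m
  have hfinal : Real.sqrt u * (q/2)
      ≤ ∑ X : Finset (Fin n), q ^ X.card * (1 - q) ^ (n - X.card) *
          Real.sqrt ((U.filter (fun S => S ∩ X = {i})).card) := by
    have h3 : ∑ X : Finset (Fin n), q ^ X.card * (1 - q) ^ (n - X.card) *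
          ((U.filter (fun S => S ∩ X = {i})).card : ℝ)
        ≤ (∑ X : Finset (Fin n), q ^ X.card * (1 - q) ^ (n - X.card) *
            Real.sqrt ((U.filter (fun S => S ∩ X = {i})).card)) * Real.sqrt u := by
      rw [Finset.sum_mul]
      apply Finset.sum_le_sum
      intro X _
      calc q ^ X.card * (1 - q) ^ (n - X.card) *
            ((U.filter (fun S => S ∩ X = {i})).card : ℝ)
          ≤ q ^ X.card * (1 - q) ^ (n - X.card) *
            (Real.sqrt ((U.filter (fun S => S ∩ X = {i})).card) * Real.sqrt u) :=
            mul_le_mul_of_nonneg_left (hpt X) (hw X)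
        _ = q ^ X.card * (1 - q) ^ (n - X.card) *
            Real.sqrt ((U.filter (fun S => S ∩ X = {i})).card) * Real.sqrt u := by ring
    have h4 := hexp.trans h3
    have husq : (u:ℝ) = Real.sqrt u * Real.sqrt u := (Real.mul_self_sqrt hu0.le).symm
    rw [husq] at h4
    nlinarith [hsu]
  -- the constant comparison
  have h25 : (2:ℝ) ^ (-(5:ℝ)/2) ≤ 1/4 := by
    have h1 : (2:ℝ) ^ (-(5:ℝ)/2) ≤ (2:ℝ) ^ (-(2:ℝ)) :=
      Real.rpow_le_rpow_of_exponent_le one_le_two (by norm_num)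
    have h2 : (2:ℝ) ^ (-(2:ℝ)) = 1/4 := by
      rw [show (-(2:ℝ)) = ((-2:ℤ):ℝ) by norm_num, Real.rpow_intCast]
      norm_num
    linarith
  have h32 : ((d:ℝ) - 1) ^ (-(3:ℝ)/2) ≤ ((d:ℝ) - 1)⁻¹ := by
    have h1 : ((d:ℝ) - 1) ^ (-(3:ℝ)/2) ≤ ((d:ℝ) - 1) ^ (-(1:ℝ)) :=
      Real.rpow_le_rpow_of_exponent_le hd1 (by norm_num)
    rwa [Real.rpow_neg_one] at h1
  have hc : (2:ℝ) ^ (-(5:ℝ)/2) * ((d:ℝ) - 1) ^ (-(3:ℝ)/2) ≤ q/2 := by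
    have hqv : q/2 = (1/4) * ((d:ℝ) - 1)⁻¹ := by
      rw [hqdef]
      field_simp
      ring
    calc (2:ℝ) ^ (-(5:ℝ)/2) * ((d:ℝ) - 1) ^ (-(3:ℝ)/2)
        ≤ (1/4) * ((d:ℝ) - 1)⁻¹ := by
          apply mul_le_mul h25 h32 (Real.rpow_nonneg (by linarith) _) (by norm_num)
      _ = q/2 := hqv.symm
  calc (2:ℝ) ^ (-(5:ℝ)/2) * ((d:ℝ) - 1) ^ (-(3:ℝ)/2) * Real.sqrt u
      ≤ (q/2) * Real.sqrt u :=
        mul_le_mul_of_nonneg_right hc (Real.sqrt_nonneg _)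
    _ = Real.sqrt u * (q/2) := mul_comm _ _
    _ ≤ _ := hfinal
end

section
/- Let F be a finite field with q elements where q ≡ 1 (mod 4), and let χ be the quadratic character of F (χ(a) = 1 if a is a nonzero square, χ(a) = −1 if a is a non-square, χ(0) = 0). Then for every function x : F → {−1,+1}, |∑_{(i,j) ∈ F×F, i ≠ j} χ(i−j) · x(i) · x(j)| ≤ 2 · q^{3/2}. -/
open Finset

/-- Shift-correlation of the quadratic character: `∑ a, χ(a) χ(a+b) = -1` for `b ≠ 0`. -/
lemma quadChar_shift_sum (F : Type) [Field F] [Fintype F] [DecidableEq F]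
    (hF : ringChar F ≠ 2) (b : F) (hb : b ≠ 0) :
    ∑ a : F, quadraticChar F a * quadraticChar F (a + b) = -1 := by
  have h1 : ∀ a : F, a ≠ 0 →
      quadraticChar F a * quadraticChar F (a + b) = quadraticChar F (1 + b * a⁻¹) := by
    intro a ha
    have h : a + b = a * (1 + b * a⁻¹) := by field_simp
    rw [h, map_mul, ← mul_assoc, ← pow_two, quadraticChar_sq_one ha, one_mul]
  have h0 : ∑ a : F, quadraticChar F a * quadraticChar F (a + b)
      = ∑ a ∈ univ.filter (fun a : F => a ≠ 0), quadraticChar F (1 + b * a⁻¹) := by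
    rw [← Finset.sum_filter_add_sum_filter_not univ (fun a : F => a ≠ 0)]
    have : ∑ a ∈ univ.filter (fun a : F => ¬ a ≠ 0),
        quadraticChar F a * quadraticChar F (a + b) = 0 := by
      apply Finset.sum_eq_zero
      intro a ha
      simp only [Finset.mem_filter, not_not] at ha
      rw [ha.2, quadraticChar_zero, zero_mul]
    rw [this, add_zero]
    exact Finset.sum_congr rfl fun a ha => h1 a (Finset.mem_filter.mp ha).2
  have h2 : ∑ a ∈ univ.filter (fun a : F => a ≠ 0), quadraticChar F (1 + b * a⁻¹)
      = ∑ c ∈ univ.filter (fun c : F => c ≠ 1), quadraticChar F c := by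
    apply Finset.sum_bij' (fun a _ => 1 + b * a⁻¹) (fun c _ => b * (c - 1)⁻¹)
    · intro a ha
      simp only [Finset.mem_filter, Finset.mem_univ, true_and] at ha ⊢
      intro h
      apply hb
      have : b * a⁻¹ = 0 := by linear_combination h
      rcases mul_eq_zero.mp this with h' | h'
      · exact h'
      · exact absurd (inv_eq_zero.mp h') ha
    · intro c hc
      simp only [Finset.mem_filter, Finset.mem_univ, true_and] at hc ⊢
      exact mul_ne_zero hb (inv_ne_zero (sub_ne_zero.mpr hc))
    · intro a ha
      simp only [Finset.mem_filter, Finset.mem_univ, true_and] at ha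
      field_simp
      rw [show a + b - a = b by ring, div_self hb]
    · intro c hc
      simp only [Finset.mem_filter, Finset.mem_univ, true_and] at hc
      have : c - 1 ≠ 0 := sub_ne_zero.mpr hc
      field_simp
      ring
    · intro a ha; rfl
  have h3 : ∑ c ∈ univ.filter (fun c : F => c ≠ 1), quadraticChar F c = -1 := by
    have := quadraticChar_sum_zero hF
    rw [← Finset.sum_filter_add_sum_filter_not univ (fun c : F => c ≠ 1)] at this
    have h4 : ∑ c ∈ univ.filter (fun c : F => ¬ c ≠ 1), quadraticChar F c = 1 := by
      have : univ.filter (fun c : F => ¬ c ≠ 1) = {1} := by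
        ext c; simp
      rw [this, Finset.sum_singleton, map_one]
    linarith [this, h4]
  rw [h0, h2, h3]

/-- Paley graph sup-norm bound: Let `F` be a finite field with
`q ≡ 1 (mod 4)` elements and let `χ` be the quadratic character of `F`. Then for every
`x : F → {-1,1}`, `|∑_{i ≠ j} χ(i−j) x(i) x(j)| ≤ 2 q^(3/2)`. -/
theorem paley_graph_bound
    (F : Type) [Field F] [Fintype F] [DecidableEq F]
    (hq : Fintype.card F % 4 = 1)
    (x : F → ℝ) (hx : ∀ i, x i = 1 ∨ x i = -1) :
    |∑ p ∈ Finset.univ.filter (fun p : F × F => p.1 ≠ p.2),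
        ((quadraticChar F (p.1 - p.2) : ℤ) : ℝ) * x p.1 * x p.2| ≤
      2 * (Fintype.card F : ℝ) ^ ((3:ℝ)/2) := by
  set q : ℝ := (Fintype.card F : ℝ) with hqdef
  have hF : ringChar F ≠ 2 := by
    intro h
    have := FiniteField.even_card_of_char_two h
    omega
  have hq0 : (0:ℝ) ≤ q := Nat.cast_nonneg _
  set c : F → F → ℝ := fun i j => ((quadraticChar F (i - j) : ℤ) : ℝ) with hc
  set f : F → ℝ := fun i => ∑ j, c i j * x j with hf
  -- inner correlation sums
  have inner : ∀ j k : F, (∑ i, c i j * c i k) = (if j = k then q else 0) - 1 := by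
    intro j k
    by_cases hjk : j = k
    · subst hjk
      simp only [if_pos rfl]
      have : ∀ i : F, c i j * c i j = if i = j then 0 else 1 := by
        intro i
        by_cases hij : i = j
        · simp [hc, hij, quadraticChar_zero]
        · have : i - j ≠ 0 := sub_ne_zero.mpr hij
          simp only [hc, if_neg hij, ← pow_two]
          rw [← Int.cast_pow, quadraticChar_sq_one this, Int.cast_one]
      rw [Finset.sum_congr rfl fun i _ => this i]
      simp [Finset.sum_ite, Finset.filter_eq', Finset.card_univ, hqdef]
      rw [Finset.filter_ne', Finset.card_erase_of_mem (Finset.mem_univ _), Finset.card_univ]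
      have : 1 ≤ Fintype.card F := Fintype.card_pos
      push_cast [Nat.cast_sub this]
      ring
    · rw [if_neg hjk]
      have hb : k - j ≠ 0 := sub_ne_zero.mpr (fun h => hjk h.symm)
      have key := quadChar_shift_sum F hF (k - j) hb
      have : ∑ i : F, c i j * c i k
          = ((∑ a : F, quadraticChar F a * quadraticChar F (a + (k - j)) : ℤ) : ℝ) := by
        push_cast
        apply Fintype.sum_equiv (Equiv.subRight k)
        intro a
        simp only [hc, Equiv.subRight_apply]
        have e1 : a - k + (k - j) = a - j := by ring
        rw [e1, mul_comm]
      rw [this, key]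
      norm_num
  have hx2 : ∀ i, x i ^ 2 = 1 := by
    intro i; rcases hx i with h | h <;> rw [h] <;> norm_num
  have hsumx2 : ∑ i : F, x i ^ 2 = q := by
    simp [hx2, hqdef, Finset.card_univ]
  -- main sum equals ∑ i, x i * f i
  have hS : ∑ p ∈ Finset.univ.filter (fun p : F × F => p.1 ≠ p.2),
        ((quadraticChar F (p.1 - p.2) : ℤ) : ℝ) * x p.1 * x p.2
      = ∑ i, x i * f i := by
    have h0 : ∀ p : F × F, p ∈ (Finset.univ : Finset (F × F)) →
        p ∉ Finset.univ.filter (fun p : F × F => p.1 ≠ p.2) →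
        ((quadraticChar F (p.1 - p.2) : ℤ) : ℝ) * x p.1 * x p.2 = 0 := by
      intro p _ hp
      simp only [Finset.mem_filter, Finset.mem_univ, true_and, not_not] at hp
      rw [hp]
      simp [quadraticChar_zero]
    calc ∑ p ∈ Finset.univ.filter (fun p : F × F => p.1 ≠ p.2),
          ((quadraticChar F (p.1 - p.2) : ℤ) : ℝ) * x p.1 * x p.2
        = ∑ p : F × F, ((quadraticChar F (p.1 - p.2) : ℤ) : ℝ) * x p.1 * x p.2 :=
          Finset.sum_subset (Finset.filter_subset _ _) h0
      _ = ∑ i, ∑ j, ((quadraticChar F (i - j) : ℤ) : ℝ) * x i * x j :=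
          Fintype.sum_prod_type _
      _ = ∑ i, x i * f i := by
          refine Finset.sum_congr rfl fun i _ => ?_
          rw [hf]
          simp only [Finset.mul_sum]
          exact Finset.sum_congr rfl fun j _ => by simp only [hc]; ring
  -- bound on ∑ f i ^ 2
  have hfsq : ∑ i, f i ^ 2 ≤ q ^ 2 := by
    have expand : ∑ i, f i ^ 2
        = ∑ j, ∑ k, (x j * x k) * (∑ i, c i j * c i k) := by
      calc ∑ i, f i ^ 2
          = ∑ i, ∑ j, ∑ k, (c i j * x j) * (c i k * x k) := by
            refine Finset.sum_congr rfl fun i _ => ?_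
            rw [hf, pow_two, Finset.sum_mul_sum]
        _ = ∑ j, ∑ k, ∑ i, (c i j * x j) * (c i k * x k) := by
            rw [Finset.sum_comm]
            exact Finset.sum_congr rfl fun j _ => Finset.sum_comm
        _ = ∑ j, ∑ k, (x j * x k) * (∑ i, c i j * c i k) := by
            refine Finset.sum_congr rfl fun j _ => Finset.sum_congr rfl fun k _ => ?_
            rw [Finset.mul_sum]
            exact Finset.sum_congr rfl fun i _ => by ring
    rw [expand]
    have step : ∑ j, ∑ k, (x j * x k) * (∑ i : F, c i j * c i k)
        = q * (∑ j, x j ^ 2) - (∑ j, x j) ^ 2 := by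
      have : ∀ j k : F, (x j * x k) * (∑ i : F, c i j * c i k)
          = (if j = k then q * x j ^ 2 else 0) - x j * x k := by
        intro j k
        rw [inner j k]
        by_cases h : j = k
        · subst h; simp; ring
        · simp [h]
      simp only [this]
      rw [Finset.sum_congr rfl fun j _ => Finset.sum_sub_distrib _ _]
      rw [Finset.sum_sub_distrib]
      congr 1
      · rw [Finset.sum_congr rfl fun j (_ : j ∈ Finset.univ) =>
          Finset.sum_ite_eq Finset.univ j (fun _ => q * x j ^ 2)]
        simp [Finset.mul_sum]
      · rw [pow_two, Finset.sum_mul_sum]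
    rw [step, hsumx2]
    nlinarith [sq_nonneg (∑ j, x j)]
  -- Cauchy-Schwarz
  have hq3 : (0:ℝ) ≤ q := hq0
  have cs : (∑ i, x i * f i) ^ 2 ≤ q ^ 3 := by
    calc (∑ i, x i * f i) ^ 2 ≤ (∑ i, x i ^ 2) * (∑ i, f i ^ 2) :=
          Finset.sum_mul_sq_le_sq_mul_sq _ _ _
      _ ≤ q * q ^ 2 := by
          rw [hsumx2]
          apply mul_le_mul_of_nonneg_left hfsq hq0
      _ = q ^ 3 := by ring
  rw [hS]
  have habs : |∑ i, x i * f i| ≤ q ^ ((3:ℝ)/2) := by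
    have h1 : |∑ i, x i * f i| = Real.sqrt ((∑ i, x i * f i) ^ 2) :=
      (Real.sqrt_sq_eq_abs _).symm
    rw [h1]
    have h2 : Real.sqrt ((∑ i, x i * f i) ^ 2) ≤ Real.sqrt (q ^ 3) :=
      Real.sqrt_le_sqrt cs
    refine h2.trans_eq ?_
    rw [Real.sqrt_eq_rpow, ← Real.rpow_natCast q 3, ← Real.rpow_mul hq0]
    norm_num
  have hpow : (0:ℝ) ≤ q ^ ((3:ℝ)/2) := Real.rpow_nonneg hq0 _
  linarith
end

section
/- Let f be a polynomial with complex coefficients of degree at most d, where d ≥ 1. Then the supremum of |f(t)| over real t in the interval [−1,1] is at least |f′(0)|/d. -/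
open Polynomial Finset Complex

noncomputable def u (m : ℕ) : ℂ := Complex.exp (Real.pi / (2*m+1) * Complex.I)
noncomputable def E (m : ℕ) (r : ℤ) : ℂ := u m ^ r
noncomputable def P (m : ℕ) (j : ℕ) (r : ℤ) : ℂ := E m (j*r) + E m (-(j*r))
noncomputable def e (m : ℕ) (j : ℕ) : ℝ := if j = 0 ∨ j = 2*m+1 then 2⁻¹ else 1
noncomputable def F (m : ℕ) (r : ℤ) : ℂ := ∑ j ∈ range (2*m+2), (e m j : ℂ) * P m j r

lemma u_ne (m : ℕ) : u m ≠ 0 := Complex.exp_ne_zero _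

lemma E_exp0 (m : ℕ) (r : ℤ) : E m r = Complex.exp (r * (Real.pi / (2*m+1) * Complex.I)) := by
  rw [E, u, ← Complex.exp_int_mul]

lemma Dne (m : ℕ) : ((2*m+1 : ℝ)) ≠ 0 := by positivity

lemma DneC0 (m : ℕ) : ((2*(m:ℂ)+1)) ≠ 0 := by
  have := Dne m; intro h; apply this; exact_mod_cast h

lemma E_D (m : ℕ) : E m (2*m+1) = -1 := by
  rw [E_exp0]
  have h : ((2*(m:ℤ)+1 : ℤ) : ℂ) * (Real.pi / (2*m+1) * Complex.I) = Real.pi * Complex.I := by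
    have h2 := DneC0 m
    push_cast
    field_simp
  rw [h, Complex.exp_pi_mul_I]

lemma E_eq_one_iff (m : ℕ) (r : ℤ) : E m r = 1 ↔ (2*(2*(m:ℤ)+1)) ∣ r := by
  have hπ : (Real.pi : ℝ) ≠ 0 := Real.pi_ne_zero
  have hD := Dne m
  rw [E_exp0, Complex.exp_eq_one_iff]
  constructor
  · rintro ⟨n, hn⟩
    refine ⟨n, ?_⟩
    have hn' : ((r * (Real.pi/(2*m+1)) : ℝ) : ℂ) * Complex.I
        = ((n * (2*Real.pi) : ℝ) : ℂ) * Complex.I := by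
      push_cast at hn ⊢; linear_combination hn
    have h3 : (r * (Real.pi/(2*m+1)) : ℝ) = (n * (2*Real.pi) : ℝ) := by
      exact_mod_cast mul_right_cancel₀ Complex.I_ne_zero hn'
    have h4 : (r : ℝ) * Real.pi = ((n * (2*(2*m+1)) : ℝ)) * Real.pi := by
      field_simp at h3; rw [h3]; ring
    have h5 : (r : ℝ) = (n * (2*(2*(m:ℝ)+1)) : ℝ) := by
      have := mul_right_cancel₀ hπ h4; push_cast at this ⊢; linarith
    exact_mod_cast (by push_cast at h5 ⊢; linarith : (r:ℝ) = ((2*(2*(m:ℤ)+1)*n : ℤ) : ℝ))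
  · rintro ⟨n, rfl⟩
    refine ⟨n, ?_⟩
    have h2 := DneC0 m
    push_cast
    field_simp

lemma E_add (m : ℕ) (a b : ℤ) : E m (a+b) = E m a * E m b := zpow_add₀ (u_ne m) a b
lemma E_pow (m : ℕ) (a : ℤ) (k : ℕ) : E m (a * k) = (E m a)^k := by
  rw [E, E, ← zpow_natCast (u m ^ a) k, ← zpow_mul]
lemma E_zpow (m : ℕ) (a b : ℤ) : E m (a * b) = (E m a)^b := by
  rw [E, E, ← zpow_mul]

lemma E_neg (m : ℕ) (a : ℤ) : E m (-a) = (E m a)⁻¹ := zpow_neg _ _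

lemma E_Dr (m : ℕ) (r : ℤ) : E m ((2*(m:ℤ)+1) * r) = (-1)^r := by
  rw [E_zpow, E_D]

lemma neg_one_zpow_mul (r : ℤ) : ((-1 : ℂ))^r * (-1)^r = 1 := by
  rw [← mul_zpow]; norm_num

lemma E_D_neg_r (m : ℕ) (r : ℤ) : E m (-((2*(m:ℤ)+1) * r)) = (-1)^r := by
  have h : ((-1:ℂ))⁻¹ = -1 := by norm_num
  rw [E_neg, E_Dr, ← inv_zpow, h]

example : True := trivial

lemma x_eq (m : ℕ) (r : ℤ) (j : ℕ) (hj : j ≤ 2*m+1) :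
    P m (2*m+1-j) r = (-1)^r * P m j r := by
  have hc : (((2*m+1-j : ℕ) : ℤ)) = (2*(m:ℤ)+1) - j := by
    push_cast [Nat.cast_sub hj]; push_cast; ring
  rw [P, P, hc]
  have e1 : E m (((2*(m:ℤ)+1) - j) * r) = (-1)^r * E m (-((j:ℤ)*r)) := by
    rw [show ((2*(m:ℤ)+1) - j) * r = (2*(m:ℤ)+1)*r + (-((j:ℤ)*r)) from by ring,
      E_add, E_Dr]
  have e2 : E m (-(((2*(m:ℤ)+1) - j) * r)) = (-1)^r * E m ((j:ℤ)*r) := by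
    rw [show -(((2*(m:ℤ)+1) - j) * r) = -((2*(m:ℤ)+1)*r) + ((j:ℤ)*r) from by ring,
      E_add, E_D_neg_r]
  rw [e1, e2]
  ring

lemma sum_e_split (m : ℕ) (x : ℕ → ℂ) :
    ∑ j ∈ range (2*m+2), (e m j : ℂ) * x j
      = (∑ j ∈ range (2*m+2), x j) - (x 0 + x (2*m+1))/2 := by
  have key : ∀ j ∈ range (2*m+2), (e m j : ℂ) * x j
      = x j - ((if j = 0 then x j / 2 else 0) + (if j = 2*m+1 then x j / 2 else 0)) := by
    intro j hj
    by_cases h0 : j = 0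
    · subst h0; simp [e]; ring
    · by_cases hD : j = 2*m+1
      · subst hD; simp [e, (by omega : ¬ (2*m+1 = 0))]; ring
      · simp [e, h0, hD]
  rw [Finset.sum_congr rfl key, Finset.sum_sub_distrib, Finset.sum_add_distrib]
  rw [Finset.sum_ite_eq' (range (2*m+2)) 0 (fun j => x j / 2),
      Finset.sum_ite_eq' (range (2*m+2)) (2*m+1) (fun j => x j / 2)]
  simp [Finset.mem_range]
  ring

lemma F_formula (m : ℕ) (r : ℤ) :
    F m r = (∑ j ∈ range (2*m+1), P m j r) + (-1)^r - 1 := by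
  rw [F, sum_e_split]
  rw [Finset.sum_range_succ]
  have hP0 : P m 0 r = 2 := by simp [P, E]; norm_num
  have hPD : P m (2*m+1) r = (-1)^r + (-1)^r := by
    rw [P]
    have : ((2*m+1 : ℕ) : ℤ) * r = (2*(m:ℤ)+1) * r := by push_cast; ring
    rw [this, E_Dr, E_D_neg_r]
  rw [hP0, hPD]; ring

lemma S_reflect (m : ℕ) (r : ℤ) :
    (∑ j ∈ range (2*m+1), P m j r) + ((-1)^r + (-1)^r)
      = 2 + (-1)^r * ∑ j ∈ range (2*m+1), P m j r := by
  have h1 : ∑ j ∈ range (2*m+2), P m j r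
      = (∑ j ∈ range (2*m+1), P m j r) + P m (2*m+1) r := Finset.sum_range_succ _ _
  have h2 : ∑ j ∈ range (2*m+2), P m j r
      = (∑ j ∈ range (2*m+1), P m (j+1) r) + P m 0 r := Finset.sum_range_succ' _ _
  have h3 : ∑ j ∈ range (2*m+1), P m (j+1) r
      = ∑ j ∈ range (2*m+1), P m (2*m+1-j) r := by
    rw [← Finset.sum_range_reflect (fun j => P m (j+1) r) (2*m+1)]
    apply Finset.sum_congr rfl
    intro j hj
    simp only [Finset.mem_range] at hj
    congr 1
    omega
  have h4 : ∑ j ∈ range (2*m+1), P m (2*m+1-j) r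
      = (-1)^r * ∑ j ∈ range (2*m+1), P m j r := by
    rw [Finset.mul_sum]
    apply Finset.sum_congr rfl
    intro j hj
    exact x_eq m r j (by simp at hj; omega)
  have hP0 : P m 0 r = 2 := by simp [P, E]; norm_num
  have hPD : P m (2*m+1) r = (-1)^r + (-1)^r := by
    rw [P]
    have : ((2*m+1 : ℕ) : ℤ) * r = (2*(m:ℤ)+1) * r := by push_cast; ring
    rw [this, E_Dr, E_D_neg_r]
  rw [h1, hPD] at h2
  rw [h3, h4, hP0] at h2
  linear_combination h2

lemma F_eq (m : ℕ) (r : ℤ) :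
    F m r = if (2*(2*(m:ℤ)+1)) ∣ r then 2*(2*m+1) else 0 := by
  rcases Int.even_or_odd r with he | ho
  · have hr1 : ((-1 : ℂ))^r = 1 := he.neg_one_zpow
    by_cases hdvd : (2*(2*(m:ℤ)+1)) ∣ r
    · rw [if_pos hdvd, F_formula, hr1]
      have h1 : ∀ j ∈ range (2*m+1), P m j r = 2 := by
        intro j hj
        have hE : E m r = 1 := (E_eq_one_iff m r).2 hdvd
        have : E m ((j:ℤ)*r) = 1 := by
          rw [mul_comm, E_pow, hE, one_pow]
        have h2 : E m (-((j:ℤ)*r)) = 1 := by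
          rw [E_neg, this, inv_one]
        rw [P, this, h2]; norm_num
      rw [Finset.sum_congr rfl h1]
      simp [Finset.sum_const, Finset.card_range]
      push_cast; ring
    · rw [if_neg hdvd, F_formula, hr1]
      have hEr : E m r ≠ 1 := fun h => hdvd ((E_eq_one_iff m r).1 h)
      have hEnr : E m (-r) ≠ 1 := by
        intro h
        apply hdvd
        exact Int.dvd_neg.mp ((E_eq_one_iff m (-r)).1 h)
      have hsplit : ∑ j ∈ range (2*m+1), P m j r
          = (∑ j ∈ range (2*m+1), (E m r)^j) + (∑ j ∈ range (2*m+1), (E m (-r))^j) := by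
        rw [← Finset.sum_add_distrib]
        apply Finset.sum_congr rfl
        intro j hj
        rw [P, show (-((j:ℤ)*r)) = (-r)*(j:ℕ) from by push_cast; ring,
          show ((j:ℤ)*r) = r*(j:ℕ) from by push_cast; ring, E_pow, E_pow]
      have hg1 : ∑ j ∈ range (2*m+1), (E m r)^j = 0 := by
        rw [geom_sum_eq hEr]
        have : (E m r)^(2*m+1) = 1 := by
          rw [← E_pow]
          have : r * ((2*m+1 : ℕ):ℤ) = (2*(m:ℤ)+1) * r := by push_cast; ring
          rw [this, E_Dr, hr1]
        rw [this]; simp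
      have hg2 : ∑ j ∈ range (2*m+1), (E m (-r))^j = 0 := by
        rw [geom_sum_eq hEnr]
        have : (E m (-r))^(2*m+1) = 1 := by
          rw [← E_pow]
          have : -r * ((2*m+1 : ℕ):ℤ) = -((2*(m:ℤ)+1) * r) := by push_cast; ring
          rw [this, E_D_neg_r, hr1]
        rw [this]; simp
      rw [hsplit, hg1, hg2]; ring
  · have hdvd : ¬ (2*(2*(m:ℤ)+1)) ∣ r := by
      intro hdvd'
      have h2 : (2:ℤ) ∣ r := dvd_trans (dvd_mul_right 2 _) hdvd'
      rcases ho with ⟨t, ht⟩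
      rcases h2 with ⟨s, hs⟩
      omega
    rw [if_neg hdvd, F_formula]
    have hr1 : ((-1 : ℂ))^r = -1 := ho.neg_one_zpow
    have hS := S_reflect m r
    rw [hr1] at hS
    have : ∑ j ∈ range (2*m+1), P m j r = 2 := by linear_combination hS/2
    rw [this, hr1]; ring

lemma P_mul (m : ℕ) (j : ℕ) (a b : ℤ) :
    P m j a * P m j b = P m j (a+b) + P m j (a-b) := by
  rw [P, P, P, P,
    show (j:ℤ)*(a+b) = (j:ℤ)*a + (j:ℤ)*b from by ring,
    show -((j:ℤ)*a + (j:ℤ)*b) = -((j:ℤ)*a) + -((j:ℤ)*b) from by ring,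
    show (j:ℤ)*(a-b) = (j:ℤ)*a + -((j:ℤ)*b) from by ring,
    show -((j:ℤ)*a + -((j:ℤ)*b)) = -((j:ℤ)*a) + (j:ℤ)*b from by ring,
    E_add, E_add, E_add, E_add]
  ring

lemma P_D (m : ℕ) (j : ℕ) : P m j (2*m+1) = 2 * (-1)^j := by
  have h1 : (j:ℤ) * (2*m+1) = (2*(m:ℤ)+1) * (j:ℕ) := by push_cast; ring
  have h2 : -((j:ℤ) * (2*m+1)) = (-(2*(m:ℤ)+1)) * (j:ℕ) := by push_cast; ring
  rw [P, h2, h1, E_pow, E_pow]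
  have h3 : E m (-(2*(m:ℤ)+1)) = -1 := by
    have := E_D_neg_r m 1
    simpa using this
  have h4 : E m (2*(m:ℤ)+1) = -1 := by
    have := E_Dr m 1
    simpa using this
  rw [h3, h4]; ring

lemma F_zero (m : ℕ) : F m 0 = 2*(2*(m:ℂ)+1) := by
  rw [F_eq, if_pos (dvd_zero _)]; push_cast; ring

lemma F_small (m : ℕ) (r : ℤ) (h1 : r ≠ 0) (h2 : |r| < 2*(2*(m:ℤ)+1)) : F m r = 0 := by
  have hdvd : ¬ (2*(2*(m:ℤ)+1)) ∣ r := by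
    intro hdvd
    have h3 : (2*(2*(m:ℤ)+1)) ∣ |r| := (dvd_abs _ _).mpr hdvd
    have h4 := Int.le_of_dvd (abs_pos.2 h1) h3
    omega
  rw [F_eq, if_neg hdvd]
  norm_num

lemma F_odd (m : ℕ) (r : ℤ) (h : Odd r) : F m r = 0 := by
  have hdvd : ¬ (2*(2*(m:ℤ)+1)) ∣ r := by
    intro hdvd
    have h2 : (2:ℤ) ∣ r := dvd_trans (dvd_mul_right 2 _) hdvd
    rcases h with ⟨t, ht⟩
    rcases h2 with ⟨s, hs⟩
    omega
  rw [F_eq, if_neg hdvd]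
  norm_num

lemma sum_swap_F (m : ℕ) {ι : Type} (S : Finset ι) (cc : ι → ℂ) (rr : ι → ℤ) :
    ∑ j ∈ range (2*m+2), (e m j : ℂ) * (∑ s ∈ S, cc s * P m j (rr s))
      = ∑ s ∈ S, cc s * F m (rr s) := by
  simp_rw [Finset.mul_sum]
  rw [Finset.sum_comm]
  apply Finset.sum_congr rfl
  intro s _
  rw [F, Finset.mul_sum]
  apply Finset.sum_congr rfl
  intro j _
  ring

lemma E_exp (m : ℕ) (r : ℤ) : E m r = Complex.exp (r * (Real.pi / (2*m+1) * Complex.I)) := by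
  rw [E, u, ← Complex.exp_int_mul]

noncomputable def y (m : ℕ) (j : ℕ) : ℝ := Real.cos (j * Real.pi / (2*m+1))
noncomputable def vR (m : ℕ) (j : ℕ) : ℝ :=
  (-1)^m * (1 + ∑ i ∈ range m, (-1)^(i+1) * (2 * Real.cos ((2*(i+1)) * (j * Real.pi / (2*m+1)))))
noncomputable def w (m : ℕ) (j : ℕ) : ℝ := (-1)^(m+j) * e m j * (vR m j)^2 / (2*m+1)
noncomputable def c (m : ℕ) (s : ℕ) : ℂ := if s = 0 then (-1)^m/2 else (-1)^(m+s)

lemma cosP (m : ℕ) (j r : ℕ) :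
    ((2 * Real.cos (r * (j * Real.pi / (2*m+1))) : ℝ) : ℂ) = P m j (r:ℤ) := by
  rw [P]
  have e1 : E m ((j:ℤ)*(r:ℤ)) = Complex.exp (((r * (j * Real.pi / (2*m+1)) : ℝ) : ℂ) * Complex.I) := by
    rw [E_exp]
    congr 1
    push_cast
    ring
  have e2 : E m (-((j:ℤ)*(r:ℤ))) = Complex.exp (-(((r * (j * Real.pi / (2*m+1)) : ℝ) : ℂ)) * Complex.I) := by
    rw [E_exp]
    congr 1
    push_cast
    ring
  rw [e1, e2]
  rw [Complex.ofReal_mul, Complex.ofReal_cos]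
  simp only [Complex.cos]
  push_cast
  ring

lemma yC (m : ℕ) (j : ℕ) : ((y m j : ℝ) : ℂ) = P m j 1 / 2 := by
  have h := cosP m j 1
  simp only [Nat.cast_one, one_mul] at h
  rw [y, ← h]
  push_cast
  ring

lemma vCraw (m : ℕ) (j : ℕ) :
    ((vR m j : ℝ) : ℂ) = (-1)^m * (1 + ∑ i ∈ range m, (-1)^(i+1) * P m j (2*((i:ℤ)+1))) := by
  rw [vR]
  have hterm : ∀ i ∈ range m,
      (((-1:ℝ)^(i+1) * (2 * Real.cos ((2*(i+1)) * (j * Real.pi / (2*m+1)))) : ℝ) : ℂ)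
        = (-1:ℂ)^(i+1) * P m j (2*((i:ℤ)+1)) := by
    intro i _
    have h := cosP m j (2*(i+1))
    rw [show (((2*(i+1):ℕ)):ℤ) = (2*((i:ℤ)+1)) from by push_cast; ring] at h
    push_cast at h ⊢
    linear_combination ((-1:ℂ)^(i+1)) * h
  rw [Complex.ofReal_mul, Complex.ofReal_add, Complex.ofReal_one, Complex.ofReal_sum,
    Finset.sum_congr rfl hterm]
  push_cast
  ring

lemma P0 (m : ℕ) (j : ℕ) : P m j 0 = 2 := by simp [P, E]; norm_num

lemma vC (m : ℕ) (j : ℕ) :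
    ((vR m j : ℝ) : ℂ) = ∑ s ∈ range (m+1), c m s * P m j (2*(s:ℤ)) := by
  rw [vCraw, Finset.sum_range_succ']
  have h0 : c m 0 * P m j (2*((0:ℕ):ℤ)) = (-1)^m := by
    rw [show (2*((0:ℕ):ℤ)) = 0 from by norm_num, P0, c]
    norm_num
  rw [h0]
  rw [mul_add, mul_one, Finset.mul_sum]
  rw [add_comm ((-1:ℂ)^m)]
  congr 1
  apply Finset.sum_congr rfl
  intro i _
  rw [c, if_neg (Nat.succ_ne_zero i)]
  rw [show ((((i+1:ℕ)):ℤ)) = ((i:ℤ)+1) from by push_cast; ring]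
  rw [pow_add, pow_succ]
  ring

lemma yv (m : ℕ) (j : ℕ) : ((y m j : ℝ) : ℂ) * ((vR m j : ℝ) : ℂ) = (-1)^j := by
  have h := Finset.sum_range_sub (fun i => (-1:ℂ)^i * P m j (2*(i:ℤ)+1)) m
  simp only [Nat.cast_zero, pow_zero, one_mul, mul_zero, zero_add] at h
  have tele : ∑ i ∈ range m, ((-1:ℂ)^(i+1) * P m j (2*(i:ℤ)+3) + (-1)^(i+1) * P m j (2*(i:ℤ)+1))
      = (-1)^m * P m j (2*(m:ℤ)+1) - P m j 1 := by
    rw [← h]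
    apply Finset.sum_congr rfl
    intro i _
    rw [show ((((i+1:ℕ)):ℤ)) = ((i:ℤ)+1) from by push_cast; ring]
    rw [show (2*((i:ℤ)+1)+1) = (2*(i:ℤ)+3) from by ring]
    rw [pow_succ]
    ring
  have hsum : ∑ i ∈ range m, (P m j 1) * ((-1:ℂ)^(i+1) * P m j (2*((i:ℤ)+1)))
      = (-1)^m * P m j (2*(m:ℤ)+1) - P m j 1 := by
    rw [← tele]
    apply Finset.sum_congr rfl
    intro i _
    have hm := P_mul m j (2*((i:ℤ)+1)) 1
    rw [show (2*((i:ℤ)+1)+1) = 2*(i:ℤ)+3 from by ring,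
       show (2*((i:ℤ)+1)-1) = 2*(i:ℤ)+1 from by ring] at hm
    linear_combination ((-1:ℂ)^(i+1)) * hm
  have hm2 : P m j 1 * (∑ i ∈ range m, (-1:ℂ)^(i+1) * P m j (2*((i:ℤ)+1)))
      = ∑ i ∈ range m, (P m j 1) * ((-1:ℂ)^(i+1) * P m j (2*((i:ℤ)+1))) := Finset.mul_sum _ _ _
  have hE : ((-1:ℂ))^m * (-1)^m = 1 := by
    rw [← pow_add]
    exact Even.neg_one_pow ⟨m, rfl⟩
  have PD' : P m j (2*(m:ℤ)+1) = 2*(-1)^j := by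
    rw [show (2*(m:ℤ)+1) = ((2*m+1:ℕ):ℤ) from by push_cast; ring]
    exact P_D m j
  rw [yC, vCraw]
  linear_combination ((-1:ℂ)^m/2) * hm2 + ((-1:ℂ)^m/2) * hsum
    + (P m j (2*(m:ℤ)+1)/2) * hE + ((1:ℂ)/2) * PD'

lemma Sum1 (m : ℕ) :
    ∑ j ∈ range (2*m+2), (e m j : ℂ) * ((vR m j : ℝ) : ℂ) = (-1)^m * (2*(m:ℂ)+1) := by
  have h1 : ∀ j ∈ range (2*m+2), (e m j : ℂ) * ((vR m j : ℝ) : ℂ)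
      = (e m j : ℂ) * (∑ s ∈ range (m+1), c m s * P m j (2*(s:ℤ))) := by
    intro j _; rw [vC]
  rw [Finset.sum_congr rfl h1, sum_swap_F]
  rw [Finset.sum_eq_single_of_mem 0 (by simp)]
  · rw [show (2*((0:ℕ):ℤ)) = 0 from by norm_num, F_zero, c]
    norm_num; ring
  · intro b hb hb0
    rw [F_small m _ (by exact_mod_cast hb0 ∘ fun h => by omega) (by
      simp only [Finset.mem_range] at hb
      rw [_root_.abs_of_nonneg (by positivity)]
      push_cast; omega)]
    ring

lemma expand_sq (m : ℕ) (j : ℕ) :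
    ((vR m j : ℝ) : ℂ)^2
      = (∑ p ∈ (range (m+1)) ×ˢ (range (m+1)), (c m p.1 * c m p.2) * P m j (2*(p.1:ℤ)+2*(p.2:ℤ)))
      + (∑ p ∈ (range (m+1)) ×ˢ (range (m+1)), (c m p.1 * c m p.2) * P m j (2*(p.1:ℤ)-2*(p.2:ℤ))) := by
  rw [vC, sq, Finset.sum_mul_sum, Finset.sum_product, Finset.sum_product,
    ← Finset.sum_add_distrib]
  apply Finset.sum_congr rfl
  intro s _
  rw [← Finset.sum_add_distrib]
  apply Finset.sum_congr rfl
  intro t _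
  have hm := P_mul m j (2*(s:ℤ)) (2*(t:ℤ))
  linear_combination (c m s * c m t) * hm

lemma c_sq (m : ℕ) (s : ℕ) : c m s * c m s = if s = 0 then 1/4 else 1 := by
  by_cases h : s = 0
  · rw [c, if_pos h, if_pos h, div_mul_div_comm, ← pow_add,
      Even.neg_one_pow (⟨m, rfl⟩ : Even (m+m))]
    norm_num
  · rw [c, if_neg h, if_neg h, ← pow_add,
      Even.neg_one_pow (⟨m+s, by ring⟩ : Even ((m+s)+(m+s)))]

lemma Sum2 (m : ℕ) :
    ∑ j ∈ range (2*m+2), (e m j : ℂ) * ((vR m j : ℝ) : ℂ)^2 = (2*(m:ℂ)+1)^2 := by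
  have h1 : ∀ j ∈ range (2*m+2), (e m j : ℂ) * ((vR m j : ℝ) : ℂ)^2
      = (e m j : ℂ) * (∑ p ∈ (range (m+1)) ×ˢ (range (m+1)), (c m p.1 * c m p.2) * P m j (2*(p.1:ℤ)+2*(p.2:ℤ)))
      + (e m j : ℂ) * (∑ p ∈ (range (m+1)) ×ˢ (range (m+1)), (c m p.1 * c m p.2) * P m j (2*(p.1:ℤ)-2*(p.2:ℤ))) := by
    intro j _; rw [expand_sq]; ring
  rw [Finset.sum_congr rfl h1, Finset.sum_add_distrib, sum_swap_F, sum_swap_F]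
  have e1 : ∑ p ∈ (range (m+1)) ×ˢ (range (m+1)), (c m p.1 * c m p.2) * F m (2*(p.1:ℤ)+2*(p.2:ℤ))
      = (2*(m:ℂ)+1)/2 := by
    rw [Finset.sum_eq_single_of_mem (0,0) (by simp)]
    · have := c_sq m 0
      rw [show (2*(((0,0):ℕ×ℕ).1:ℤ)+2*(((0,0):ℕ×ℕ).2:ℤ)) = 0 from by norm_num, F_zero]
      simp at this ⊢
      rw [show (c m 0 * c m 0 = 1/4) from by simpa using this]
      ring
    · intro b hb hb0
      simp only [Finset.mem_product, Finset.mem_range] at hb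
      rw [F_small m _ (by
          intro h
          apply hb0
          have h1 : b.1 = 0 ∧ b.2 = 0 := by omega
          exact Prod.ext h1.1 h1.2) (by
          rw [_root_.abs_of_nonneg (by positivity)]
          push_cast; omega)]
      ring
  have e2 : ∑ p ∈ (range (m+1)) ×ˢ (range (m+1)), (c m p.1 * c m p.2) * F m (2*(p.1:ℤ)-2*(p.2:ℤ))
      = (2*(m:ℂ)+1)/2 + 2*m*(2*(m:ℂ)+1) := by
    rw [Finset.sum_product]
    have inner : ∀ s ∈ range (m+1),
        ∑ t ∈ range (m+1), (c m s * c m t) * F m (2*(s:ℤ)-2*(t:ℤ))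
          = (c m s * c m s) * (2*(2*(m:ℂ)+1)) := by
      intro s hs
      rw [Finset.sum_eq_single_of_mem s hs]
      · rw [show (2*(s:ℤ)-2*(s:ℤ)) = 0 from by ring, F_zero]
      · intro b hb hbs
        simp only [Finset.mem_range] at hb hs
        rw [F_small m _ (by
            intro h
            apply hbs
            omega) (by
            rw [abs_sub_lt_iff]
            push_cast
            constructor <;> omega)]
        ring
    rw [Finset.sum_congr rfl inner]
    have : ∀ s ∈ range (m+1), (c m s * c m s) * (2*(2*(m:ℂ)+1))
        = (if s = 0 then 1/4 else 1) * (2*(2*(m:ℂ)+1)) := by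
      intro s _; rw [c_sq]
    rw [Finset.sum_congr rfl this, Finset.sum_range_succ']
    simp only [if_pos rfl]
    have : ∀ i ∈ range m, (if i+1 = 0 then (1/4 : ℂ) else 1) * (2*(2*(m:ℂ)+1))
        = (2*(2*(m:ℂ)+1)) := by
      intro i _; rw [if_neg (Nat.succ_ne_zero i)]; ring
    rw [Finset.sum_congr rfl this, Finset.sum_const, Finset.card_range]
    push_cast
    ring
  rw [e1, e2]
  ring

lemma PD2 (m : ℕ) (j : ℕ) : P m j (2*(m:ℤ)+1) = 2*(-1:ℂ)^j := by
  rw [show (2*(m:ℤ)+1) = ((2*m+1:ℕ):ℤ) from by push_cast; ring]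
  exact P_D m j

lemma sum_swap_F4 (m : ℕ) {ι : Type} (S : Finset ι) (cc : ι → ℂ) (r1 r2 r3 r4 : ι → ℤ) :
    ∑ j ∈ range (2*m+2), (e m j : ℂ) *
        (∑ s ∈ S, cc s * (P m j (r1 s) + P m j (r2 s) + P m j (r3 s) + P m j (r4 s)))
      = ∑ s ∈ S, cc s * (F m (r1 s) + F m (r2 s) + F m (r3 s) + F m (r4 s)) := by
  simp_rw [Finset.mul_sum]
  rw [Finset.sum_comm]
  apply Finset.sum_congr rfl
  intro s _
  rw [F, F, F, F, ← Finset.sum_add_distrib, ← Finset.sum_add_distrib,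
    ← Finset.sum_add_distrib, Finset.mul_sum]
  apply Finset.sum_congr rfl
  intro j _
  ring

lemma Sum3 (m : ℕ) :
    ∑ j ∈ range (2*m+2), (e m j : ℂ) * ((-1)^j * ((vR m j : ℝ) : ℂ)^2) = 0 := by
  have expand : ∀ j, (-1:ℂ)^j * ((vR m j : ℝ) : ℂ)^2
      = ∑ p ∈ (range (m+1)) ×ˢ (range (m+1)), (c m p.1 * c m p.2/2) *
          (P m j ((2*(m:ℤ)+1)+(2*(p.1:ℤ)+2*(p.2:ℤ)))
          + P m j ((2*(m:ℤ)+1)-(2*(p.1:ℤ)+2*(p.2:ℤ)))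
          + P m j ((2*(m:ℤ)+1)+(2*(p.1:ℤ)-2*(p.2:ℤ)))
          + P m j ((2*(m:ℤ)+1)-(2*(p.1:ℤ)-2*(p.2:ℤ)))) := by
    intro j
    have key : P m j (2*(m:ℤ)+1) * ((vR m j : ℝ) : ℂ)^2
        = ∑ p ∈ (range (m+1)) ×ˢ (range (m+1)), (c m p.1 * c m p.2) *
          (P m j ((2*(m:ℤ)+1)+(2*(p.1:ℤ)+2*(p.2:ℤ)))
          + P m j ((2*(m:ℤ)+1)-(2*(p.1:ℤ)+2*(p.2:ℤ)))
          + P m j ((2*(m:ℤ)+1)+(2*(p.1:ℤ)-2*(p.2:ℤ)))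
          + P m j ((2*(m:ℤ)+1)-(2*(p.1:ℤ)-2*(p.2:ℤ)))) := by
      rw [expand_sq, mul_add, Finset.mul_sum, Finset.mul_sum, ← Finset.sum_add_distrib]
      apply Finset.sum_congr rfl
      intro p _
      have h1 := P_mul m j (2*(m:ℤ)+1) (2*(p.1:ℤ)+2*(p.2:ℤ))
      have h2 := P_mul m j (2*(m:ℤ)+1) (2*(p.1:ℤ)-2*(p.2:ℤ))
      linear_combination (c m p.1 * c m p.2) * h1 + (c m p.1 * c m p.2) * h2
    have hPD := PD2 m j
    have hdiv : ∑ p ∈ (range (m+1)) ×ˢ (range (m+1)), (c m p.1 * c m p.2/2) *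
          (P m j ((2*(m:ℤ)+1)+(2*(p.1:ℤ)+2*(p.2:ℤ)))
          + P m j ((2*(m:ℤ)+1)-(2*(p.1:ℤ)+2*(p.2:ℤ)))
          + P m j ((2*(m:ℤ)+1)+(2*(p.1:ℤ)-2*(p.2:ℤ)))
          + P m j ((2*(m:ℤ)+1)-(2*(p.1:ℤ)-2*(p.2:ℤ))))
        = (∑ p ∈ (range (m+1)) ×ˢ (range (m+1)), (c m p.1 * c m p.2) *
          (P m j ((2*(m:ℤ)+1)+(2*(p.1:ℤ)+2*(p.2:ℤ)))
          + P m j ((2*(m:ℤ)+1)-(2*(p.1:ℤ)+2*(p.2:ℤ)))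
          + P m j ((2*(m:ℤ)+1)+(2*(p.1:ℤ)-2*(p.2:ℤ)))
          + P m j ((2*(m:ℤ)+1)-(2*(p.1:ℤ)-2*(p.2:ℤ))))) / 2 := by
      rw [Finset.sum_div]
      apply Finset.sum_congr rfl
      intro p _
      ring
    rw [hdiv, ← key]
    rw [hPD]
    ring
  have h1 : ∀ j ∈ range (2*m+2), (e m j : ℂ) * ((-1)^j * ((vR m j : ℝ) : ℂ)^2)
      = (e m j : ℂ) * (∑ p ∈ (range (m+1)) ×ˢ (range (m+1)), (c m p.1 * c m p.2/2) *
          (P m j ((2*(m:ℤ)+1)+(2*(p.1:ℤ)+2*(p.2:ℤ)))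
          + P m j ((2*(m:ℤ)+1)-(2*(p.1:ℤ)+2*(p.2:ℤ)))
          + P m j ((2*(m:ℤ)+1)+(2*(p.1:ℤ)-2*(p.2:ℤ)))
          + P m j ((2*(m:ℤ)+1)-(2*(p.1:ℤ)-2*(p.2:ℤ))))) := by
    intro j _
    rw [expand j]
  rw [Finset.sum_congr rfl h1, sum_swap_F4]
  apply Finset.sum_eq_zero
  intro p _
  have o1 : Odd ((2*(m:ℤ)+1)+(2*(p.1:ℤ)+2*(p.2:ℤ))) := by rw [Int.odd_iff]; omega
  have o2 : Odd ((2*(m:ℤ)+1)-(2*(p.1:ℤ)+2*(p.2:ℤ))) := by rw [Int.odd_iff]; omega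
  have o3 : Odd ((2*(m:ℤ)+1)+(2*(p.1:ℤ)-2*(p.2:ℤ))) := by rw [Int.odd_iff]; omega
  have o4 : Odd ((2*(m:ℤ)+1)-(2*(p.1:ℤ)-2*(p.2:ℤ))) := by rw [Int.odd_iff]; omega
  rw [F_odd m _ o1, F_odd m _ o2, F_odd m _ o3, F_odd m _ o4]
  ring

lemma DneC (m : ℕ) : ((2*(m:ℂ)+1)) ≠ 0 := by
  have h : ((2*m+1 : ℕ):ℂ) ≠ 0 := Nat.cast_ne_zero.mpr (by omega)
  push_cast at h
  exact h

lemma binom_refl (m j q : ℕ) :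
    2*(P m j 1)^q = ∑ k ∈ range (q+1), ((q.choose k : ℂ)) * P m j (2*(k:ℤ)-q) := by
  have claim1 : (P m j 1)^q = ∑ k ∈ range (q+1), ((q.choose k : ℂ)) * E m ((j:ℤ)*(2*(k:ℤ)-q)) := by
    rw [P, add_pow]
    apply Finset.sum_congr rfl
    intro k hk
    simp only [Finset.mem_range] at hk
    have hk' : k ≤ q := by omega
    rw [← E_pow, ← E_pow, ← E_add]
    rw [show ((j:ℤ)*1*(k:ℕ) + (-((j:ℤ)*1))*((q-k:ℕ):ℤ)) = (j:ℤ)*(2*(k:ℤ)-q) from by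
      rw [Nat.cast_sub hk']; push_cast; ring]
    ring
  have claim2 : (P m j 1)^q = ∑ k ∈ range (q+1), ((q.choose k : ℂ)) * E m (-((j:ℤ)*(2*(k:ℤ)-q))) := by
    rw [claim1, ← Finset.sum_range_reflect]
    apply Finset.sum_congr rfl
    intro k hk
    simp only [Finset.mem_range] at hk
    have hk' : k ≤ q := by omega
    rw [show (q+1-1-k) = q-k from by omega]
    rw [Nat.choose_symm hk']
    congr 1
    rw [Nat.cast_sub hk']
    push_cast
    ring
  have : 2*(P m j 1)^q = (∑ k ∈ range (q+1), ((q.choose k : ℂ)) * E m ((j:ℤ)*(2*(k:ℤ)-q)))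
      + ∑ k ∈ range (q+1), ((q.choose k : ℂ)) * E m (-((j:ℤ)*(2*(k:ℤ)-q))) := by
    rw [← claim1, ← claim2]; ring
  rw [this, ← Finset.sum_add_distrib]
  apply Finset.sum_congr rfl
  intro k _
  rw [P]
  ring

lemma sum_swap_F2 (m : ℕ) {ι : Type} (S : Finset ι) (cc : ι → ℂ) (r1 r2 : ι → ℤ) :
    ∑ j ∈ range (2*m+2), (e m j : ℂ) *
        (∑ s ∈ S, cc s * (P m j (r1 s) + P m j (r2 s)))
      = ∑ s ∈ S, cc s * (F m (r1 s) + F m (r2 s)) := by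
  simp_rw [Finset.mul_sum]
  rw [Finset.sum_comm]
  apply Finset.sum_congr rfl
  intro s _
  rw [F, F, ← Finset.sum_add_distrib, Finset.mul_sum]
  apply Finset.sum_congr rfl
  intro j _
  ring

lemma Sum4 (m q : ℕ) (hq : q + 2 ≤ 2*m+1) :
    ∑ j ∈ range (2*m+2), (e m j : ℂ) * ((-1)^j * ((y m j : ℝ):ℂ)^q) = 0 := by
  have expand : ∀ j, (-1:ℂ)^j * ((y m j : ℝ):ℂ)^q
      = ∑ k ∈ range (q+1), ((q.choose k : ℂ)/2^(q+2)) *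
          (P m j ((2*(m:ℤ)+1)+(2*(k:ℤ)-q)) + P m j ((2*(m:ℤ)+1)-(2*(k:ℤ)-q))) := by
    intro j
    have key : P m j (2*(m:ℤ)+1) * (2*(P m j 1)^q)
        = ∑ k ∈ range (q+1), ((q.choose k : ℂ)) *
            (P m j ((2*(m:ℤ)+1)+(2*(k:ℤ)-q)) + P m j ((2*(m:ℤ)+1)-(2*(k:ℤ)-q))) := by
      rw [binom_refl, Finset.mul_sum]
      apply Finset.sum_congr rfl
      intro k _
      have hm := P_mul m j (2*(m:ℤ)+1) (2*(k:ℤ)-q)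
      linear_combination ((q.choose k : ℂ)) * hm
    have hdiv : ∑ k ∈ range (q+1), ((q.choose k : ℂ)/2^(q+2)) *
          (P m j ((2*(m:ℤ)+1)+(2*(k:ℤ)-q)) + P m j ((2*(m:ℤ)+1)-(2*(k:ℤ)-q)))
        = (∑ k ∈ range (q+1), ((q.choose k : ℂ)) *
            (P m j ((2*(m:ℤ)+1)+(2*(k:ℤ)-q)) + P m j ((2*(m:ℤ)+1)-(2*(k:ℤ)-q)))) / 2^(q+2) := by
      rw [Finset.sum_div]
      apply Finset.sum_congr rfl
      intro k _
      ring
    rw [hdiv, ← key, yC, PD2, div_pow]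
    have h2 : ((2:ℂ))^(q+2) ≠ 0 := pow_ne_zero _ two_ne_zero
    have h2' : ((2:ℂ))^q ≠ 0 := pow_ne_zero _ two_ne_zero
    field_simp
    ring
  have h1 : ∀ j ∈ range (2*m+2), (e m j : ℂ) * ((-1)^j * ((y m j : ℝ):ℂ)^q)
      = (e m j : ℂ) * (∑ k ∈ range (q+1), ((q.choose k : ℂ)/2^(q+2)) *
          (P m j ((2*(m:ℤ)+1)+(2*(k:ℤ)-q)) + P m j ((2*(m:ℤ)+1)-(2*(k:ℤ)-q)))) := by
    intro j _
    rw [expand j]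
  rw [Finset.sum_congr rfl h1, sum_swap_F2]
  apply Finset.sum_eq_zero
  intro k hk
  simp only [Finset.mem_range] at hk
  have b1 : F m ((2*(m:ℤ)+1)+(2*(k:ℤ)-q)) = 0 := by
    apply F_small
    · omega
    · rw [abs_lt]; constructor <;> omega
  have b2 : F m ((2*(m:ℤ)+1)-(2*(k:ℤ)-q)) = 0 := by
    apply F_small
    · omega
    · rw [abs_lt]; constructor <;> omega
  rw [b1, b2]
  ring

lemma wC (m : ℕ) (j : ℕ) :
    ((w m j : ℝ) : ℂ) = (-1)^(m+j) * (e m j : ℂ) * ((vR m j : ℝ) : ℂ)^2 / (2*(m:ℂ)+1) := by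
  rw [w]
  push_cast
  ring

lemma monomial_sum (m : ℕ) (M : ℕ) (hM : M ≤ 2*m+1) :
    ∑ j ∈ range (2*m+2), ((w m j : ℝ) : ℂ) * ((y m j : ℝ) : ℂ)^M
      = if M = 1 then 1 else 0 := by
  have hD := DneC m
  match M with
  | 0 =>
    have h1 : ∀ j ∈ range (2*m+2), ((w m j : ℝ) : ℂ) * ((y m j : ℝ) : ℂ)^0
        = ((-1:ℂ)^m/(2*(m:ℂ)+1)) * ((e m j : ℂ) * ((-1)^j * ((vR m j : ℝ) : ℂ)^2)) := by
      intro j _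
      rw [wC, pow_add]
      ring
    rw [Finset.sum_congr rfl h1, ← Finset.mul_sum, Sum3]
    simp
  | 1 =>
    have h1 : ∀ j ∈ range (2*m+2), ((w m j : ℝ) : ℂ) * ((y m j : ℝ) : ℂ)^1
        = ((-1:ℂ)^m/(2*(m:ℂ)+1)) * ((e m j : ℂ) * ((vR m j : ℝ) : ℂ)) := by
      intro j _
      have hyv := yv m j
      have hj2 : ((-1:ℂ))^j * (-1)^j = 1 := by
        rw [← pow_add]; exact Even.neg_one_pow ⟨j, rfl⟩
      rw [wC, pow_add]
      have hv := ((vR m j : ℝ) : ℂ)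
      linear_combination ((-1:ℂ)^m/(2*(m:ℂ)+1) * (-1:ℂ)^j * (e m j : ℂ) * ((vR m j:ℝ):ℂ)) * hyv
        + ((-1:ℂ)^m/(2*(m:ℂ)+1) * (e m j : ℂ) * ((vR m j:ℝ):ℂ)) * hj2
    rw [Finset.sum_congr rfl h1, ← Finset.mul_sum, Sum1, if_pos rfl]
    have hm2 : ((-1:ℂ))^m * (-1)^m = 1 := by
      rw [← pow_add]; exact Even.neg_one_pow ⟨m, rfl⟩
    rw [mul_comm ((-1:ℂ)^m) (2*(m:ℂ)+1), ← mul_assoc, div_mul_cancel₀ _ hD, hm2]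
  | (q+2) =>
    have h1 : ∀ j ∈ range (2*m+2), ((w m j : ℝ) : ℂ) * ((y m j : ℝ) : ℂ)^(q+2)
        = ((-1:ℂ)^m/(2*(m:ℂ)+1)) * ((e m j : ℂ) * ((-1)^j * ((y m j : ℝ) : ℂ)^q)) := by
      intro j _
      have hyv := yv m j
      have hj2 : ((-1:ℂ))^j * (-1)^j = 1 := by
        rw [← pow_add]; exact Even.neg_one_pow ⟨j, rfl⟩
      rw [wC, pow_add]
      linear_combination ((-1:ℂ)^m/(2*(m:ℂ)+1) * (-1:ℂ)^j * (e m j : ℂ) * ((y m j:ℝ):ℂ)^q *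
          (((y m j:ℝ):ℂ) * ((vR m j:ℝ):ℂ) + (-1:ℂ)^j)) * hyv
        + ((-1:ℂ)^m/(2*(m:ℂ)+1) * (-1:ℂ)^j * (e m j : ℂ) * ((y m j:ℝ):ℂ)^q) * hj2
    rw [Finset.sum_congr rfl h1, ← Finset.mul_sum, Sum4 m q (by omega)]
    simp

lemma interp (m : ℕ) (f : Polynomial ℂ) (hf : f.natDegree ≤ 2*m+1) :
    ∑ j ∈ range (2*m+2), ((w m j : ℝ) : ℂ) * f.eval ((y m j : ℝ) : ℂ) = f.coeff 1 := by
  have hlt : f.natDegree < 2*m+2 := by omega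
  have h1 : ∀ j ∈ range (2*m+2), ((w m j : ℝ) : ℂ) * f.eval ((y m j : ℝ) : ℂ)
      = ∑ M ∈ range (2*m+2), f.coeff M * (((w m j : ℝ) : ℂ) * ((y m j : ℝ) : ℂ)^M) := by
    intro j _
    rw [Polynomial.eval_eq_sum_range' hlt, Finset.mul_sum]
    apply Finset.sum_congr rfl
    intro M _
    ring
  rw [Finset.sum_congr rfl h1, Finset.sum_comm]
  have h2 : ∀ M ∈ range (2*m+2),
      ∑ j ∈ range (2*m+2), f.coeff M * (((w m j : ℝ) : ℂ) * ((y m j : ℝ) : ℂ)^M)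
        = f.coeff M * (if M = 1 then 1 else 0) := by
    intro M hM
    simp only [Finset.mem_range] at hM
    rw [← Finset.mul_sum, monomial_sum m M (by omega)]
  rw [Finset.sum_congr rfl h2]
  rw [Finset.sum_eq_single_of_mem 1 (by simp [Finset.mem_range])]
  · simp
  · intro b _ hb
    rw [if_neg hb]
    ring

lemma e_pos (m : ℕ) (j : ℕ) : 0 < e m j := by
  rw [e]; split <;> norm_num

lemma abs_w_sum (m : ℕ) : ∑ j ∈ range (2*m+2), |w m j| = 2*m+1 := by
  have h1 : ∀ j ∈ range (2*m+2), |w m j| = e m j * (vR m j)^2 / (2*m+1) := by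
    intro j _
    rw [w, abs_div, abs_mul, abs_mul, _root_.abs_pow, abs_neg, abs_one, one_pow, one_mul,
      _root_.abs_of_nonneg (le_of_lt (e_pos m j)), _root_.abs_of_nonneg (sq_nonneg _),
      _root_.abs_of_nonneg (by positivity : (0:ℝ) ≤ 2*(m:ℝ)+1)]
  rw [Finset.sum_congr rfl h1]
  have h2 : ∑ j ∈ range (2*m+2), e m j * (vR m j)^2 = (2*(m:ℝ)+1)^2 := by
    have := Sum2 m
    exact_mod_cast this
  rw [← Finset.sum_div, h2]
  have : (2*(m:ℝ)+1) ≠ 0 := by positivity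
  field_simp

lemma coeff_comp_neg (f : Polynomial ℂ) (k : ℕ) :
    (f.comp (-Polynomial.X)).coeff k = (-1)^k * f.coeff k := by
  induction f using Polynomial.induction_on' with
  | add p q hp hq => rw [Polynomial.add_comp, Polynomial.coeff_add, hp, hq,
      Polynomial.coeff_add]; ring
  | monomial n a =>
    rw [← Polynomial.C_mul_X_pow_eq_monomial, Polynomial.mul_comp, Polynomial.C_comp,
      Polynomial.X_pow_comp,
      neg_pow, show ((-1 : Polynomial ℂ))^n = Polynomial.C ((-1:ℂ)^n) from by
        rw [map_pow, map_neg, map_one],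
      ← mul_assoc, ← Polynomial.C_mul, Polynomial.coeff_C_mul, Polynomial.coeff_C_mul,
      Polynomial.coeff_X_pow]
    by_cases h : k = n
    · subst h; simp; ring
    · simp [h]

/-- Bernstein: For a polynomial `f` with complex coefficients of degree at
most `d ≥ 1`, the supremum of `|f(t)|` over real `t ∈ [−1,1]` is at least `|f′(0)|/d`. -/
theorem bernstein_inequality (d : ℕ) (hd : 1 ≤ d) (f : Polynomial ℂ)
    (hf : f.natDegree ≤ d) :
    ‖(Polynomial.derivative f).eval 0‖ / d ≤
      ⨆ t : Set.Icc (-1:ℝ) 1, ‖f.eval ((t : ℝ) : ℂ)‖ := by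
  classical
  set g : Polynomial ℂ := Polynomial.C (1/2 : ℂ) * (f - f.comp (-Polynomial.X)) with hg
  have hgcoeff : ∀ k, g.coeff k = (1 - (-1)^k)/2 * f.coeff k := by
    intro k
    rw [hg, Polynomial.coeff_C_mul, Polynomial.coeff_sub, coeff_comp_neg]
    ring
  have hgeval : ∀ x : ℝ, g.eval (x:ℂ) = (f.eval (x:ℂ) - f.eval ((-x : ℝ):ℂ))/2 := by
    intro x
    rw [hg]
    simp [Polynomial.eval_comp]
    push_cast
    ring
  obtain ⟨mm, hmmle, hdeg⟩ : ∃ mm, 2*mm+1 ≤ d ∧ g.natDegree ≤ 2*mm+1 := by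
    rcases Nat.even_or_odd d with he | ho
    · rcases he with ⟨t, ht⟩
      refine ⟨d/2 - 1, by omega, ?_⟩
      rw [Polynomial.natDegree_le_iff_coeff_eq_zero]
      intro k hk
      by_cases hkd : k = d
      · rw [hgcoeff, hkd, Even.neg_one_pow ⟨t, ht⟩]
        ring
      · rw [hgcoeff, Polynomial.coeff_eq_zero_of_natDegree_lt (by omega : f.natDegree < k)]
        ring
    · rcases ho with ⟨t, ht⟩
      refine ⟨d/2, by omega, ?_⟩
      rw [Polynomial.natDegree_le_iff_coeff_eq_zero]
      intro k hk
      rw [hgcoeff, Polynomial.coeff_eq_zero_of_natDegree_lt (by omega : f.natDegree < k)]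
      ring
  have cont : Continuous (fun t : Set.Icc (-1:ℝ) 1 => ‖f.eval ((t : ℝ) : ℂ)‖) :=
    continuous_norm.comp (f.continuous.comp
      (Complex.continuous_ofReal.comp continuous_subtype_val))
  have bdd : BddAbove (Set.range fun t : Set.Icc (-1:ℝ) 1 =>
      ‖f.eval ((t : ℝ) : ℂ)‖) := (isCompact_range cont).bddAbove
  set Msup := ⨆ t : Set.Icc (-1:ℝ) 1, ‖f.eval ((t : ℝ) : ℂ)‖ with hMsup
  have hble : ∀ x : ℝ, x ∈ Set.Icc (-1:ℝ) 1 → ‖f.eval (x:ℂ)‖ ≤ Msup := by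
    intro x hx
    exact le_ciSup bdd (⟨x, hx⟩ : Set.Icc (-1:ℝ) 1)
  have hM0 : 0 ≤ Msup :=
    le_trans (norm_nonneg _) (hble 0 (by norm_num))
  have hnode : ∀ j, y mm j ∈ Set.Icc (-1:ℝ) 1 :=
    fun j => ⟨Real.neg_one_le_cos _, Real.cos_le_one _⟩
  have hnodeneg : ∀ j, -y mm j ∈ Set.Icc (-1:ℝ) 1 := by
    intro j
    have h := hnode j
    simp only [Set.mem_Icc] at h ⊢
    constructor <;> linarith [h.1, h.2]
  have hgb : ∀ j, ‖g.eval ((y mm j : ℝ):ℂ)‖ ≤ Msup := by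
    intro j
    rw [hgeval]
    calc ‖(f.eval ((y mm j:ℝ):ℂ) - f.eval ((-(y mm j):ℝ):ℂ))/2‖
        ≤ (‖f.eval ((y mm j:ℝ):ℂ)‖ + ‖f.eval ((-(y mm j):ℝ):ℂ)‖)/2 := by
          rw [norm_div, Complex.norm_two]
          have := norm_sub_le (f.eval ((y mm j:ℝ):ℂ)) (f.eval ((-(y mm j):ℝ):ℂ))
          linarith
      _ ≤ (Msup + Msup)/2 := by
          have h1 := hble _ (hnode j)
          have h2 := hble _ (hnodeneg j)
          linarith
      _ = Msup := by ring
  have key := interp mm g hdeg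
  have h1 : ‖f.coeff 1‖ ≤ (2*mm+1) * Msup := by
    have hc1 : g.coeff 1 = f.coeff 1 := by rw [hgcoeff]; norm_num
    rw [← hc1, ← key]
    calc ‖∑ j ∈ Finset.range (2*mm+2), ((w mm j : ℝ) : ℂ) * g.eval ((y mm j : ℝ) : ℂ)‖
        ≤ ∑ j ∈ Finset.range (2*mm+2), ‖((w mm j : ℝ) : ℂ) * g.eval ((y mm j : ℝ) : ℂ)‖ :=
          norm_sum_le _ _
      _ ≤ ∑ j ∈ Finset.range (2*mm+2), |w mm j| * Msup := by
          apply Finset.sum_le_sum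
          intro j _
          rw [norm_mul, Complex.norm_real, Real.norm_eq_abs]
          exact mul_le_mul_of_nonneg_left (hgb j) (abs_nonneg _)
      _ = (∑ j ∈ Finset.range (2*mm+2), |w mm j|) * Msup := (Finset.sum_mul _ _ _).symm
      _ = (2*mm+1) * Msup := by rw [abs_w_sum]
  have h2 : (Polynomial.derivative f).eval 0 = f.coeff 1 := by
    rw [← Polynomial.coeff_zero_eq_eval_zero, Polynomial.coeff_derivative]
    norm_num
  rw [div_le_iff₀ (by exact_mod_cast Nat.pos_of_ne_zero (by omega) : (0:ℝ) < (d:ℝ))]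
  rw [h2]
  have hd' : ((2*mm+1 : ℕ):ℝ) ≤ (d:ℝ) := by exact_mod_cast hmmle
  push_cast at hd'
  calc ‖f.coeff 1‖ ≤ (2*mm+1) * Msup := h1
    _ ≤ Msup * d := by nlinarith
end

section
/- Let d be a positive integer. There exists a choice of signs ε(σ) ∈ {−1,+1}, one for each permutation σ of {1,…,d}, such that for every matrix M with entries M_{i,j} ∈ {−1,+1}, |∑_{σ ∈ S_d} ε(σ) · ∏_{i=1}^d M_{i,σ(i)}| ≤ √(2·(d²+1)·d!). -/
open Finset Real

noncomputable def pmSgn (b : Bool) : ℝ := if b then 1 else -1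

lemma pmSgn_mem (b : Bool) : pmSgn b = 1 ∨ pmSgn b = -1 := by
  cases b <;> simp [pmSgn]

section Counting

variable {P : Type*} [Fintype P] [DecidableEq P]

lemma mgf_sum (t : ℝ) (X : P → ℝ) (hX : ∀ σ, X σ = 1 ∨ X σ = -1) :
    ∑ ε : P → Bool, Real.exp (t * ∑ σ, pmSgn (ε σ) * X σ)
      = (Real.exp t + Real.exp (-t)) ^ (Fintype.card P) := by
  have h1 : ∀ ε : P → Bool, Real.exp (t * ∑ σ, pmSgn (ε σ) * X σ)
      = ∏ σ, Real.exp (t * (pmSgn (ε σ) * X σ)) := by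
    intro ε
    rw [Finset.mul_sum, Real.exp_sum]
  simp_rw [h1]
  rw [← Fintype.prod_sum (fun σ b => Real.exp (t * (pmSgn b * X σ)))]
  rw [← Finset.card_univ, ← Finset.prod_const]
  apply Finset.prod_congr rfl
  intro σ _
  rw [Fintype.sum_bool]
  rcases hX σ with h | h <;> simp [pmSgn, h, add_comm]

lemma tail_count (t a : ℝ) (ht : 0 ≤ t) (X : P → ℝ) (hX : ∀ σ, X σ = 1 ∨ X σ = -1) :
    ((univ.filter fun ε : P → Bool => a ≤ ∑ σ, pmSgn (ε σ) * X σ).card : ℝ)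
      ≤ (Real.exp t + Real.exp (-t)) ^ (Fintype.card P) * Real.exp (-(t * a)) := by
  classical
  have h1 : ((univ.filter fun ε : P → Bool =>
        a ≤ ∑ σ, pmSgn (ε σ) * X σ).card : ℝ) * Real.exp (t * a)
      ≤ (Real.exp t + Real.exp (-t)) ^ (Fintype.card P) := by
    rw [← mgf_sum t X hX]
    calc ((univ.filter fun ε : P → Bool =>
          a ≤ ∑ σ, pmSgn (ε σ) * X σ).card : ℝ) * Real.exp (t * a)
        = ∑ _ε ∈ (univ.filter fun ε : P → Bool =>
            a ≤ ∑ σ, pmSgn (ε σ) * X σ), Real.exp (t * a) := by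
          rw [Finset.sum_const, nsmul_eq_mul]
      _ ≤ ∑ ε ∈ (univ.filter fun ε : P → Bool =>
            a ≤ ∑ σ, pmSgn (ε σ) * X σ), Real.exp (t * ∑ σ, pmSgn (ε σ) * X σ) := by
          apply Finset.sum_le_sum
          intro ε hε
          have := (Finset.mem_filter.1 hε).2
          exact Real.exp_le_exp.2 (mul_le_mul_of_nonneg_left this ht)
      _ ≤ ∑ ε : P → Bool, Real.exp (t * ∑ σ, pmSgn (ε σ) * X σ) := by
          apply Finset.sum_le_sum_of_subset_of_nonneg (Finset.filter_subset _ _)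
          intro _ _ _
          exact (Real.exp_pos _).le
  have h2 := mul_le_mul_of_nonneg_right h1 (Real.exp_pos (-(t * a))).le
  rwa [mul_assoc, ← Real.exp_add, add_neg_cancel, Real.exp_zero, mul_one] at h2

lemma abs_tail_count (t a : ℝ) (ht : 0 ≤ t) (X : P → ℝ) (hX : ∀ σ, X σ = 1 ∨ X σ = -1) :
    ((univ.filter fun ε : P → Bool => a < |∑ σ, pmSgn (ε σ) * X σ|).card : ℝ)
      ≤ 2 * ((Real.exp t + Real.exp (-t)) ^ (Fintype.card P) * Real.exp (-(t * a))) := by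
  classical
  have hX' : ∀ σ, (-X) σ = 1 ∨ (-X) σ = -1 := by
    intro σ
    rcases hX σ with h | h <;> simp [h]
  have hneg : ∀ ε : P → Bool, ∑ σ, pmSgn (ε σ) * (-X) σ = -∑ σ, pmSgn (ε σ) * X σ := by
    intro ε
    simp [mul_neg, Finset.sum_neg_distrib]
  have hsub : (univ.filter fun ε : P → Bool => a < |∑ σ, pmSgn (ε σ) * X σ|)
      ⊆ (univ.filter fun ε : P → Bool => a ≤ ∑ σ, pmSgn (ε σ) * X σ)
        ∪ (univ.filter fun ε : P → Bool => a ≤ ∑ σ, pmSgn (ε σ) * (-X) σ) := by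
    intro ε hε
    simp only [Finset.mem_filter, Finset.mem_univ, true_and, Finset.mem_union] at *
    rcases lt_abs.1 hε with h | h
    · left; linarith
    · right; rw [hneg]; linarith
  calc ((univ.filter fun ε : P → Bool => a < |∑ σ, pmSgn (ε σ) * X σ|).card : ℝ)
      ≤ (((univ.filter fun ε : P → Bool => a ≤ ∑ σ, pmSgn (ε σ) * X σ)
        ∪ (univ.filter fun ε : P → Bool => a ≤ ∑ σ, pmSgn (ε σ) * (-X) σ)).card : ℝ) := by
        exact_mod_cast Finset.card_le_card hsub
    _ ≤ (((univ.filter fun ε : P → Bool => a ≤ ∑ σ, pmSgn (ε σ) * X σ).card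
        + (univ.filter fun ε : P → Bool => a ≤ ∑ σ, pmSgn (ε σ) * (-X) σ).card : ℕ) : ℝ) := by
        exact_mod_cast Finset.card_union_le _ _
    _ ≤ ((Real.exp t + Real.exp (-t)) ^ (Fintype.card P) * Real.exp (-(t * a)))
        + ((Real.exp t + Real.exp (-t)) ^ (Fintype.card P) * Real.exp (-(t * a))) := by
        push_cast
        exact add_le_add (tail_count t a ht X hX) (tail_count t a ht (-X) hX')
    _ = 2 * ((Real.exp t + Real.exp (-t)) ^ (Fintype.card P) * Real.exp (-(t * a))) := by ring

end Counting

/-- quasi-random "determinant" support: For every positive integer `d`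
there are signs `ε σ ∈ {-1,1}`, one for each permutation `σ` of `{1,…,d}`, such that for
every matrix `M` with `±1` entries,
`|∑_σ ε σ ∏_i M i (σ i)| ≤ √(2 (d²+1) d!)`. -/
theorem permanent_support_littlewood_bound (d : ℕ) (hd : 0 < d) :
    ∃ ε : Equiv.Perm (Fin d) → ℝ,
      (∀ σ, ε σ = 1 ∨ ε σ = -1) ∧
      ∀ M : Fin d → Fin d → ℝ, (∀ i j, M i j = 1 ∨ M i j = -1) →
        |∑ σ : Equiv.Perm (Fin d), ε σ * ∏ i : Fin d, M i (σ i)| ≤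
          Real.sqrt (2 * ((d:ℝ) ^ 2 + 1) * (Nat.factorial d : ℝ)) := by
  classical
  set P := Equiv.Perm (Fin d)
  set u : ℕ := Fintype.card P with hu
  have hu' : u = Nat.factorial d := by
    rw [hu]; simp [P, Fintype.card_perm, Fintype.card_fin]
  have hupos : 0 < u := by rw [hu']; exact Nat.factorial_pos d
  set a : ℝ := Real.sqrt (2 * ((d:ℝ) ^ 2 + 1) * (Nat.factorial d : ℝ)) with ha
  have hbase : 0 ≤ 2 * ((d:ℝ) ^ 2 + 1) * (Nat.factorial d : ℝ) := by positivity
  have ha2 : a ^ 2 = 2 * ((d:ℝ) ^ 2 + 1) * (Nat.factorial d : ℝ) := Real.sq_sqrt hbase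
  have ha0 : 0 ≤ a := Real.sqrt_nonneg _
  set t : ℝ := a / u with htdef
  have ht0 : 0 ≤ t := by positivity
  -- the key per-matrix tail bound
  have key : ∀ X : P → ℝ, (∀ σ, X σ = 1 ∨ X σ = -1) →
      ((univ.filter fun ε : P → Bool => a < |∑ σ, pmSgn (ε σ) * X σ|).card : ℝ)
        ≤ 2 * (2:ℝ) ^ u * Real.exp (-((d:ℝ) ^ 2 + 1)) := by
    intro X hX
    refine (abs_tail_count t a ht0 X hX).trans ?_
    have hcosh : Real.exp t + Real.exp (-t) = 2 * Real.cosh t := by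
      rw [Real.cosh_eq]; ring
    have hch : Real.exp t + Real.exp (-t) ≤ 2 * Real.exp (t ^ 2 / 2) := by
      rw [hcosh]
      have := Real.cosh_le_exp_half_sq t
      linarith
    have hpos : (0:ℝ) ≤ Real.exp t + Real.exp (-t) := by positivity
    have hpow : (Real.exp t + Real.exp (-t)) ^ u ≤ (2 * Real.exp (t ^ 2 / 2)) ^ u :=
      pow_le_pow_left₀ hpos hch u
    have hexp : (2 * Real.exp (t ^ 2 / 2)) ^ u * Real.exp (-(t * a))
        = (2:ℝ) ^ u * Real.exp ((u : ℝ) * (t ^ 2 / 2) - t * a) := by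
      rw [mul_pow, ← Real.exp_nat_mul, mul_assoc, ← Real.exp_add]
      ring_nf
    have harith : (u : ℝ) * (t ^ 2 / 2) - t * a = -((d:ℝ) ^ 2 + 1) := by
      have hune : (u : ℝ) ≠ 0 := by positivity
      rw [htdef]
      field_simp
      rw [← hu'] at ha2
      push_cast at ha2 ⊢
      nlinarith [ha2]
    calc 2 * ((Real.exp t + Real.exp (-t)) ^ u * Real.exp (-(t * a)))
        ≤ 2 * ((2 * Real.exp (t ^ 2 / 2)) ^ u * Real.exp (-(t * a))) := by
          have := mul_le_mul_of_nonneg_right hpow (Real.exp_pos (-(t * a))).le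
          linarith
      _ = 2 * ((2:ℝ) ^ u * Real.exp ((u : ℝ) * (t ^ 2 / 2) - t * a)) := by rw [hexp]
      _ = 2 * (2:ℝ) ^ u * Real.exp (-((d:ℝ) ^ 2 + 1)) := by rw [harith]; ring
  -- union bound over all sign matrices
  set B : Finset (P → Bool) :=
    univ.filter fun ε : P → Bool =>
      ∃ N : Fin d → Fin d → Bool, a < |∑ σ, pmSgn (ε σ) * ∏ i, pmSgn (N i (σ i))| with hB
  have hBsub : B ⊆ Finset.univ.biUnion fun N : Fin d → Fin d → Bool =>
      univ.filter fun ε : P → Bool => a < |∑ σ, pmSgn (ε σ) * ∏ i, pmSgn (N i (σ i))| := by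
    intro ε hε
    rw [hB, Finset.mem_filter] at hε
    obtain ⟨-, N, hN⟩ := hε
    exact Finset.mem_biUnion.2 ⟨N, Finset.mem_univ _, Finset.mem_filter.2 ⟨Finset.mem_univ _, hN⟩⟩
  have hcardB : (B.card : ℝ) ≤ (2:ℝ) ^ (d * d) * (2 * (2:ℝ) ^ u * Real.exp (-((d:ℝ) ^ 2 + 1))) := by
    have h1 : (B.card : ℕ) ≤ ∑ N : Fin d → Fin d → Bool,
        (univ.filter fun ε : P → Bool =>
          a < |∑ σ, pmSgn (ε σ) * ∏ i, pmSgn (N i (σ i))|).card :=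
      le_trans (Finset.card_le_card hBsub) (Finset.card_biUnion_le)
    have h2 : ((∑ N : Fin d → Fin d → Bool,
        (univ.filter fun ε : P → Bool =>
          a < |∑ σ, pmSgn (ε σ) * ∏ i, pmSgn (N i (σ i))|).card : ℕ) : ℝ)
        ≤ (Fintype.card (Fin d → Fin d → Bool) : ℝ) *
          (2 * (2:ℝ) ^ u * Real.exp (-((d:ℝ) ^ 2 + 1))) := by
      push_cast
      rw [← Finset.card_univ, ← nsmul_eq_mul]
      apply Finset.sum_le_card_nsmul
      intro N _
      apply key
      intro σ
      rcases Finset.prod_induction (fun i => pmSgn (N i (σ i))) (fun x => x = 1 ∨ x = -1)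
        (by rintro x y (hx | hx) (hy | hy) <;> simp [hx, hy]) (Or.inl rfl)
        (fun i _ => pmSgn_mem _) with h | h
      · exact Or.inl h
      · exact Or.inr h
    have h3 : (Fintype.card (Fin d → Fin d → Bool) : ℝ) = (2:ℝ) ^ (d * d) := by
      rw [Fintype.card_fun, Fintype.card_fun]
      push_cast
      rw [← pow_mul]
      simp [Fintype.card_bool, mul_comm]
    calc (B.card : ℝ) ≤ _ := by exact_mod_cast h1
      _ ≤ _ := h2
      _ = _ := by rw [h3]
  have hlt : (B.card : ℝ) < (2:ℝ) ^ u := by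
    have hm : ((d:ℝ) ^ 2 + 1) = ((d * d + 1 : ℕ) : ℝ) := by push_cast; ring
    have h2e : (2:ℝ) ^ (d * d + 1) < Real.exp ((d * d + 1 : ℕ) : ℝ) := by
      rw [← Real.exp_one_pow]
      exact pow_lt_pow_left₀ (by have := Real.exp_one_gt_d9; linarith) (by norm_num)
        (Nat.succ_ne_zero _)
    have h4 : (2:ℝ) ^ (d * d) * 2 * Real.exp (-((d:ℝ) ^ 2 + 1)) < 1 := by
      rw [hm, Real.exp_neg, ← div_eq_mul_inv, div_lt_one (Real.exp_pos _)]
      calc (2:ℝ) ^ (d * d) * 2 = 2 ^ (d * d + 1) := by ring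
        _ < _ := h2e
    calc (B.card : ℝ) ≤ (2:ℝ) ^ (d * d) * (2 * (2:ℝ) ^ u * Real.exp (-((d:ℝ) ^ 2 + 1))) := hcardB
      _ = ((2:ℝ) ^ (d * d) * 2 * Real.exp (-((d:ℝ) ^ 2 + 1))) * (2:ℝ) ^ u := by ring
      _ < 1 * (2:ℝ) ^ u := by
          exact mul_lt_mul_of_pos_right h4 (by positivity)
      _ = (2:ℝ) ^ u := one_mul _
  have hcard_univ : ((Fintype.card (P → Bool)) : ℝ) = (2:ℝ) ^ u := by
    rw [Fintype.card_fun]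
    push_cast
    simp [Fintype.card_bool]
    exact hu.symm
  obtain ⟨ε0, hε0⟩ : ∃ ε0 : P → Bool, ε0 ∉ B := by
    by_contra h
    push_neg at h
    have hBuniv : B = Finset.univ := Finset.eq_univ_iff_forall.2 h
    rw [hBuniv, Finset.card_univ, hcard_univ] at hlt
    exact lt_irrefl _ hlt
  have hgood : ∀ N : Fin d → Fin d → Bool,
      |∑ σ : P, pmSgn (ε0 σ) * ∏ i, pmSgn (N i (σ i))| ≤ a := by
    intro N
    by_contra h
    push_neg at h
    exact hε0 (Finset.mem_filter.2 ⟨Finset.mem_univ _, ⟨N, h⟩⟩)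
  refine ⟨fun σ => pmSgn (ε0 σ), fun σ => pmSgn_mem _, ?_⟩
  intro M hM
  set N : Fin d → Fin d → Bool := fun i j => if M i j = 1 then true else false with hN
  have hMN : ∀ i j, M i j = pmSgn (N i j) := by
    intro i j
    rcases hM i j with h | h
    · simp [hN, pmSgn, h]
    · have hne1 : M i j ≠ 1 := by rw [h]; norm_num
      simp only [hN, pmSgn, h]
      norm_num
  have heq : ∑ σ : P, pmSgn (ε0 σ) * ∏ i, M i (σ i)
      = ∑ σ : P, pmSgn (ε0 σ) * ∏ i, pmSgn (N i (σ i)) := by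
    apply Finset.sum_congr rfl
    intro σ _
    congr 1
    exact Finset.prod_congr rfl fun i _ => hMN i (σ i)
  rw [heq]
  exact hgood N
end
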